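/- If x : ℝ → ℝ is periodic with minimal period p > 0 and satisfies x(t - 2) = -x(t) for all t, and x is not constant, then p = 4/(2m-1) for some positive integer m. In particular 4 is a period of x. -/
import Mathlib


theorem minimal_period_of_antisymmetric
    (x : ℝ → ℝ) (hcont : Continuous x) (hnc : ∃ s t : ℝ, x s ≠ x t)
    (p : ℝ) (hp : 0 < p) (hper : ∀ t : ℝ, x (t + p) = x t)
    (hmin : ∀ q : ℝ, 0 < q → (∀ t : ℝ, x (t + q) = x t) → p ≤ q)
    (hanti : ∀ t : ℝ, x (t - 2) = -x t) :
    (∃ m : ℕ, 0 < m ∧ p = 4 / (2 * (m : ℝ) - 1)) ∧ ∀ t : ℝ, x (t + 4) = x t := by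
  have h4 : ∀ t : ℝ, x (t + 4) = x t := by
    intro t
    have h1 := hanti (t + 4)
    have h2 := hanti (t + 2)
    have e1 : t + 4 - 2 = t + 2 := by ring
    have e2 : t + 2 - 2 = t := by ring
    rw [e1] at h1
    rw [e2, h1] at h2
    simpa using h2.symm
  have hper' : Function.Periodic x p := hper
  have hk : ∀ (k : ℤ) (t : ℝ), x (t + k * p) = x t := fun k t => hper'.int_mul k t
  set n : ℤ := ⌊(4:ℝ)/p⌋ with hn
  have hnp : (n : ℝ) * p ≤ 4 := by
    have := Int.floor_le ((4:ℝ)/p)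
    calc (n:ℝ) * p ≤ (4/p) * p := by nlinarith
    _ = 4 := by field_simp
  have hlt : (4:ℝ) < (n + 1) * p := by
    have := Int.lt_floor_add_one ((4:ℝ)/p)
    have h2 : (4:ℝ)/p * p < ((n:ℝ) + 1) * p := by nlinarith
    calc (4:ℝ) = 4/p * p := by field_simp
    _ < ((n:ℝ)+1) * p := h2
  have hr : ∀ t : ℝ, x (t + (4 - (n:ℝ) * p)) = x t := by
    intro t
    have e : t + (4 - (n:ℝ) * p) = (t + 4) + (-n : ℤ) * p := by push_cast; ring
    rw [e, hk (-n) (t + 4), h4]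
  have hr0 : (4:ℝ) - (n:ℝ) * p = 0 := by
    by_contra h
    have hpos : 0 < (4:ℝ) - (n:ℝ) * p := lt_of_le_of_ne (by linarith) (Ne.symm h)
    have := hmin _ hpos hr
    nlinarith
  have h4np : (4:ℝ) = (n:ℝ) * p := by linarith
  have hn1 : 1 ≤ n := by
    by_contra h
    push_neg at h
    have : (n:ℝ) ≤ 0 := by exact_mod_cast Int.lt_add_one_iff.mp (by exact_mod_cast h)
    nlinarith
  -- n is odd
  have hodd : ¬ (2 ∣ n) := by
    rintro ⟨k, hkk⟩
    have h2p : (2:ℝ) = (k:ℝ) * p := by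
      have : (4:ℝ) = 2 * ((k:ℝ) * p) := by rw [h4np, hkk]; push_cast; ring
      linarith
    have hper2 : ∀ t : ℝ, x (t + 2) = x t := by
      intro t
      rw [show (2:ℝ) = (k:ℝ) * p from h2p, hk k t]
    have hzero : ∀ t : ℝ, x t = 0 := by
      intro t
      have ha := hanti (t + 2)
      have e : t + 2 - 2 = t := by ring
      rw [e, hper2 t] at ha
      linarith
    obtain ⟨s, t, hst⟩ := hnc
    exact hst (by rw [hzero s, hzero t])
  have : Odd n := Int.odd_iff.mpr (Int.emod_emod_of_dvd n (dvd_refl 2) ▸ by omega)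
  obtain ⟨k, hkk⟩ := this
  have hk0 : 0 ≤ k := by omega
  refine ⟨⟨k.toNat + 1, Nat.succ_pos _, ?_⟩, h4⟩
  have hne : (2 * ((k.toNat : ℝ) + 1) - 1) = (n : ℝ) := by
    have hcast : ((k.toNat : ℝ)) = (k : ℝ) := by exact_mod_cast Int.toNat_of_nonneg hk0
    rw [hkk]
    push_cast
    rw [hcast]; ring
  have hnpos : (0:ℝ) < (n:ℝ) := by exact_mod_cast hn1
  push_cast
  rw [hne]
  field_simp at h4np ⊢
  linarith [h4np]
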